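/- For p ∈ S and v ∈ T_0, the differential of exp_p at v is d exp_p(v)[u] = R_{exp_p(v)}[u] for all u ∈ T_0, where R_q[u] = q ⊙ u − ⟨q, u⟩q. -/

import Mathlib

open Finset Real

/-- The open probability simplex in ℝ^c. -/
def simplexS (c : ℕ) : Set (Fin c → ℝ) := {p | (∀ i, 0 < p i) ∧ ∑ i, p i = 1}

/-- Tangent space: vectors with zero coordinate sum. -/
def T0 (c : ℕ) : Set (Fin c → ℝ) := {v | ∑ i, v i = 0}

/-- Orthogonal projection onto T0. -/
noncomputable def proj0 {c : ℕ} (u : Fin c → ℝ) : Fin c → ℝ :=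
  fun i => u i - (∑ j, u j) / c

/-- exp_p(v) = (p ⊙ e^v)/⟨p, e^v⟩. -/
noncomputable def expMap {c : ℕ} (p v : Fin c → ℝ) : Fin c → ℝ :=
  fun i => p i * Real.exp (v i) / ∑ j, p j * Real.exp (v j)

/-- Inverse of exp_p restricted to T0: exp_p⁻¹(q) = Π₀[log(q/p)]. -/
noncomputable def expInv {c : ℕ} (p q : Fin c → ℝ) : Fin c → ℝ :=
  proj0 (fun i => Real.log (q i / p i))

/-- R_q[u] = q ⊙ u − ⟨q,u⟩ q. -/
def Rmap {c : ℕ} (q u : Fin c → ℝ) : Fin c → ℝ :=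
  fun i => q i * u i - (∑ j, q j * u j) * q i

/-- Barycenter 𝟙ₛ = (1/c,…,1/c). -/
noncomputable def bary (c : ℕ) : Fin c → ℝ := fun _ => 1 / c

theorem stmt8 {c : ℕ} (p : Fin c → ℝ) (hp : p ∈ simplexS c) (v : Fin c → ℝ) (hv : v ∈ T0 c) :
    ∃ f' : (Fin c → ℝ) →L[ℝ] (Fin c → ℝ),
      HasFDerivAt (fun w => expMap p w) f' v ∧
      ∀ u ∈ T0 c, f' u = Rmap (expMap p v) u := by
  obtain ⟨hp_pos, hp_sum⟩ := hp
  have hc : c ≠ 0 := by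
    rintro rfl
    simp at hp_sum
  have hne : (Finset.univ : Finset (Fin c)).Nonempty := by
    simpa [Finset.univ_nonempty_iff, Fin.pos_iff_nonempty] using Nat.pos_of_ne_zero hc
  set Sv : ℝ := ∑ j, p j * Real.exp (v j) with hSv
  have hS_pos : 0 < Sv := Finset.sum_pos (fun j _ => mul_pos (hp_pos j) (Real.exp_pos _)) hne
  have hS_ne : Sv ≠ 0 := ne_of_gt hS_pos
  set q : Fin c → ℝ := expMap p v with hq
  set L0 : (Fin c → ℝ) →L[ℝ] ℝ := ∑ j, q j • (ContinuousLinearMap.proj j : (Fin c → ℝ) →L[ℝ] ℝ) with hL0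
  set f' : (Fin c → ℝ) →L[ℝ] (Fin c → ℝ) :=
    ContinuousLinearMap.pi (fun i => q i • (ContinuousLinearMap.proj i : (Fin c → ℝ) →L[ℝ] ℝ) - q i • L0) with hf'
  have hL0_apply : ∀ u, L0 u = ∑ j, q j * u j := by
    intro u
    simp [hL0, ContinuousLinearMap.sum_apply]
  have hNi : ∀ i, HasFDerivAt (fun w : Fin c → ℝ => p i * Real.exp (w i))
      (((p i * Real.exp (v i)) • ContinuousLinearMap.proj i : (Fin c → ℝ) →L[ℝ] ℝ)) v := by
    intro i
    have h := ((hasFDerivAt_apply (𝕜 := ℝ) i v).exp).const_mul (p i)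
    rwa [smul_smul] at h
  set L : (Fin c → ℝ) →L[ℝ] ℝ :=
    ∑ j, (p j * Real.exp (v j)) • (ContinuousLinearMap.proj j : (Fin c → ℝ) →L[ℝ] ℝ) with hL
  have hS' : HasFDerivAt (fun w : Fin c → ℝ => ∑ j, p j * Real.exp (w j)) L v :=
    HasFDerivAt.fun_sum (fun j _ => hNi j)
  have hinv : HasFDerivAt (fun w : Fin c → ℝ => (∑ j, p j * Real.exp (w j))⁻¹)
      ((-(Sv ^ 2)⁻¹) • L) v := by
    have h := (hasDerivAt_inv hS_ne).comp_hasFDerivAt v hS'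
    exact h
  refine ⟨f', ?_, ?_⟩
  · apply hasFDerivAt_pi'.2
    intro i
    have key := (hNi i).mul hinv
    have hfun : (fun w : Fin c → ℝ => expMap p w i)
        = fun w => (p i * Real.exp (w i)) * (∑ j, p j * Real.exp (w j))⁻¹ := by
      funext w
      simp [expMap, div_eq_mul_inv]
    rw [hfun]
    convert key using 1
    · rfl
    · rfl
    refine ContinuousLinearMap.ext fun (u : Fin c → ℝ) => ?_
    simp only [ContinuousLinearMap.coe_comp', Function.comp_apply, hf',
      ContinuousLinearMap.pi_apply, ContinuousLinearMap.sub_apply,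
      ContinuousLinearMap.smul_apply, ContinuousLinearMap.proj_apply,
      ContinuousLinearMap.add_apply, smul_eq_mul, hL0_apply]
    have hLu : L u = ∑ j, (p j * Real.exp (v j)) * u j := by
      simp [hL, ContinuousLinearMap.sum_apply]
    rw [hLu]
    have hqj : ∀ j, q j = p j * Real.exp (v j) / Sv := fun j => rfl
    simp only [hqj]
    have hsum : ∑ j, p j * Real.exp (v j) / Sv * u j
        = (∑ j, p j * Real.exp (v j) * u j) / Sv := by
      rw [Finset.sum_div]
      exact Finset.sum_congr rfl fun j _ => by ring
    rw [hsum, ← hSv]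
    field_simp
    ring
  · intro u hu
    funext i
    simp only [hf', ContinuousLinearMap.pi_apply, ContinuousLinearMap.sub_apply,
      ContinuousLinearMap.smul_apply, ContinuousLinearMap.proj_apply, smul_eq_mul,
      hL0_apply, Rmap]
    ring
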